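/- Let Σ be a positive semidefinite p × p real matrix, T₀ ⊆ {1,…,p} with |T₀| = S ≥ 1, let q ≥ 1, and let ε ≥ 0 and c ≥ 0. Suppose h ∈ C_{T₀} satisfies hᵀΣh ≤ ε‖h‖₁² + c‖h‖₁, and suppose the weak cone invertibility factor satisfies F_q(T₀; Σ) > 0. Then ‖h‖_q ≤ 2 S^{1/q} (ε‖h‖₁ + c) / F_q(T₀; Σ). -/

import Mathlib

open Matrix Finset

noncomputable def l1 {p : ℕ} (h : Fin p → ℝ) : ℝ := ∑ j, |h j|
noncomputable def l2 {p : ℕ} (h : Fin p → ℝ) : ℝ := Real.sqrt (∑ j, (h j) ^ 2)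
noncomputable def lqNorm {p : ℕ} (q : ℝ) (h : Fin p → ℝ) : ℝ := (∑ j, |h j| ^ q) ^ (1 / q)
noncomputable def linf {p : ℕ} (h : Fin p → ℝ) : ℝ := ⨆ j, |h j|
def restr {p : ℕ} (T : Finset (Fin p)) (h : Fin p → ℝ) : Fin p → ℝ :=
  fun j => if j ∈ T then h j else 0
def coneC {p : ℕ} (T : Finset (Fin p)) (h : Fin p → ℝ) : Prop :=
  l1 (restr Tᶜ h) ≤ l1 (restr T h)
noncomputable def quad {p : ℕ} (M : Matrix (Fin p) (Fin p) ℝ) (h : Fin p → ℝ) : ℝ :=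
  h ⬝ᵥ M.mulVec h

/-- Compatibility factor `κ(T₀; M) = inf_{0 ≠ h ∈ C_{T₀}} √|T₀| (hᵀMh)^{1/2} / ‖h_{T₀}‖₁`. -/
noncomputable def kappa {p : ℕ} (T0 : Finset (Fin p)) (M : Matrix (Fin p) (Fin p) ℝ) : ℝ :=
  sInf {x | ∃ h : Fin p → ℝ, h ≠ 0 ∧ coneC T0 h ∧
    x = Real.sqrt (T0.card) * Real.sqrt (quad M h) / l1 (restr T0 h)}

/-- Restricted eigenvalue `RE(T₀; M) = inf_{0 ≠ h ∈ C_{T₀}} (hᵀMh)^{1/2} / ‖h‖₂`. -/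
noncomputable def RE {p : ℕ} (T0 : Finset (Fin p)) (M : Matrix (Fin p) (Fin p) ℝ) : ℝ :=
  sInf {x | ∃ h : Fin p → ℝ, h ≠ 0 ∧ coneC T0 h ∧ x = Real.sqrt (quad M h) / l2 h}

/-- Weak cone invertibility factor
`F_q(T₀; M) = inf_{0 ≠ h ∈ C_{T₀}} |T₀|^{1/q} (hᵀMh) / (‖h_{T₀}‖₁ ‖h‖_q)`. -/
noncomputable def Fq {p : ℕ} (q : ℝ) (T0 : Finset (Fin p)) (M : Matrix (Fin p) (Fin p) ℝ) : ℝ :=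
  sInf {x | ∃ h : Fin p → ℝ, h ≠ 0 ∧ coneC T0 h ∧
    x = (T0.card : ℝ) ^ (1 / q) * quad M h / (l1 (restr T0 h) * lqNorm q h)}

lemma l1_nonneg' {p : ℕ} (h : Fin p → ℝ) : 0 ≤ l1 h :=
  Finset.sum_nonneg fun _ _ => abs_nonneg _

lemma lqNorm_nonneg' {p : ℕ} (q : ℝ) (h : Fin p → ℝ) : 0 ≤ lqNorm q h :=
  Real.rpow_nonneg (Finset.sum_nonneg fun _ _ => Real.rpow_nonneg (abs_nonneg _) _) _

lemma l1_eq_zero_iff {p : ℕ} (h : Fin p → ℝ) : l1 h = 0 ↔ h = 0 := by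
  constructor
  · intro h0
    funext j
    have := (Finset.sum_eq_zero_iff_of_nonneg (fun i _ => abs_nonneg (h i))).mp h0 j (by simp)
    simpa [abs_eq_zero] using this
  · rintro rfl; simp [l1]

lemma l1_split {p : ℕ} (T : Finset (Fin p)) (h : Fin p → ℝ) :
    l1 h = l1 (restr T h) + l1 (restr Tᶜ h) := by
  unfold l1 restr
  rw [← Finset.sum_add_distrib]
  apply Finset.sum_congr rfl
  intro j _
  by_cases hj : j ∈ T <;> simp [hj]

lemma lqNorm_pos {p : ℕ} (q : ℝ) (hq : 0 < q) (h : Fin p → ℝ) (hh : h ≠ 0) :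
    0 < lqNorm q h := by
  obtain ⟨j, hj⟩ : ∃ j, h j ≠ 0 := by
    by_contra hcon
    push_neg at hcon
    exact hh (funext hcon)
  have hpos : 0 < |h j| ^ q := Real.rpow_pos_of_pos (abs_pos.mpr hj) q
  have hsum : 0 < ∑ i, |h i| ^ q := by
    have := Finset.single_le_sum (f := fun i => |h i| ^ q)
      (fun i _ => Real.rpow_nonneg (abs_nonneg _) _) (Finset.mem_univ j)
    linarith
  exact Real.rpow_pos_of_pos hsum _

/-- deterministic core of Theorem 4.5(ii): `l_q` bound. -/
theorem stmt13 {p : ℕ} (M : Matrix (Fin p) (Fin p) ℝ) (hM : M.PosSemidef)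
    (T0 : Finset (Fin p)) (S : ℕ) (hS : T0.card = S) (hS1 : 1 ≤ S)
    (q : ℝ) (hq : 1 ≤ q) (ε c : ℝ) (hε : 0 ≤ ε) (hc : 0 ≤ c)
    (h : Fin p → ℝ) (hcone : coneC T0 h)
    (hquad : quad M h ≤ ε * l1 h ^ 2 + c * l1 h)
    (hFq : 0 < Fq q T0 M) :
    lqNorm q h ≤ 2 * (S : ℝ) ^ (1 / q) * (ε * l1 h + c) / Fq q T0 M := by
  have hq0 : (0:ℝ) < q := lt_of_lt_of_le one_pos hq
  have hK : (0:ℝ) < (S : ℝ) ^ (1 / q) := by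
    apply Real.rpow_pos_of_pos
    exact_mod_cast Nat.lt_of_lt_of_le Nat.zero_lt_one hS1
  by_cases hh : h = 0
  · subst hh
    have : lqNorm q (0 : Fin p → ℝ) = 0 := by
      simp [lqNorm, Real.zero_rpow hq0.ne', Real.zero_rpow (inv_ne_zero hq0.ne')]
    rw [this]
    have : (0:ℝ) ≤ ε * l1 (0 : Fin p → ℝ) + c := by
      simp [l1]; exact hc
    positivity
  · set A := l1 (restr T0 h) with hA
    set B := lqNorm q h with hB
    have hBpos : 0 < B := lqNorm_pos q hq0 h hh
    have hApos : 0 < A := by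
      rcases lt_or_eq_of_le (l1_nonneg' (restr T0 h)) with h' | h'
      · exact h'
      · exfalso
        have hco := hcone
        unfold coneC at hco
        rw [← h'] at hco
        have hTc : l1 (restr T0ᶜ h) = 0 := le_antisymm hco (l1_nonneg' _)
        have : l1 h = 0 := by rw [l1_split T0 h, ← h', hTc]; ring
        exact hh ((l1_eq_zero_iff h).mp this)
    have hqd : 0 ≤ quad M h := by
      have := hM.dotProduct_mulVec_nonneg h
      simpa [quad, star] using this
    -- Fq is at most the value at h
    have hmem : ((S:ℝ) ^ (1/q) * quad M h / (A * B)) ∈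
        {x | ∃ g : Fin p → ℝ, g ≠ 0 ∧ coneC T0 g ∧
          x = (T0.card : ℝ) ^ (1 / q) * quad M g / (l1 (restr T0 g) * lqNorm q g)} := by
      exact ⟨h, hh, hcone, by rw [hS]⟩
    have hbdd : BddBelow {x | ∃ g : Fin p → ℝ, g ≠ 0 ∧ coneC T0 g ∧
        x = (T0.card : ℝ) ^ (1 / q) * quad M g / (l1 (restr T0 g) * lqNorm q g)} := by
      refine ⟨0, ?_⟩
      rintro x ⟨g, hg, hgc, rfl⟩
      have hqg : 0 ≤ quad M g := by
        have := hM.dotProduct_mulVec_nonneg g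
        simpa [quad, star] using this
      have hnum : 0 ≤ (T0.card : ℝ) ^ (1 / q) * quad M g :=
        mul_nonneg (Real.rpow_nonneg (Nat.cast_nonneg _) _) hqg
      have hden : 0 ≤ l1 (restr T0 g) * lqNorm q g :=
        mul_nonneg (l1_nonneg' _) (lqNorm_nonneg' _ _)
      exact div_nonneg hnum hden
    have hle : Fq q T0 M ≤ (S:ℝ) ^ (1/q) * quad M h / (A * B) :=
      csInf_le hbdd hmem
    -- turn into product inequality
    have hABpos : 0 < A * B := mul_pos hApos hBpos
    have key : Fq q T0 M * (A * B) ≤ (S:ℝ) ^ (1/q) * quad M h := by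
      rw [← le_div_iff₀ hABpos]; exact hle
    -- l1 h ≤ 2A
    have hl1le : l1 h ≤ 2 * A := by
      rw [l1_split T0 h]
      have := hcone
      unfold coneC at this
      rw [← hA] at this ⊢
      linarith
    have hl1nn : 0 ≤ l1 h := l1_nonneg' h
    have hecnn : 0 ≤ ε * l1 h + c := by positivity
    have hquad2 : quad M h ≤ (ε * l1 h + c) * (2 * A) := by
      calc quad M h ≤ ε * l1 h ^ 2 + c * l1 h := hquad
        _ = (ε * l1 h + c) * l1 h := by ring
        _ ≤ (ε * l1 h + c) * (2 * A) := mul_le_mul_of_nonneg_left hl1le hecnn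
    have key2 : Fq q T0 M * (A * B) ≤ (S:ℝ) ^ (1/q) * ((ε * l1 h + c) * (2 * A)) :=
      key.trans (mul_le_mul_of_nonneg_left hquad2 (le_of_lt hK))
    have key3 : Fq q T0 M * B ≤ 2 * (S:ℝ) ^ (1/q) * (ε * l1 h + c) := by
      nlinarith [key2, hApos]
    rw [le_div_iff₀ hFq]
    linarith [key3, mul_comm (Fq q T0 M) B]
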